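/- In the F^α-scheme with α_n → ∞ and A_n/A_{n+1} → 0: if ∑_{n=1}^∞ A_n/A_{n+1} < ∞ then P(M_n > X_n infinitely often) = 0 (so almost surely M_n = X_n for all large n), while if ∑_{n=1}^∞ A_n/A_{n+1} = ∞ then P(M_n > X_n infinitely often) = 1. -/

import Mathlib

open MeasureTheory Filter Set

section AuxiliaryLemmas

lemma slice_measure {F : ℝ → ℝ} (hFmono : Monotone F) (hFcont : Continuous F)
    (hFbot : Tendsto F atBot (nhds 0)) (hFtop : Tendsto F atTop (nhds 1))
    (ν : Measure ℝ) [IsProbabilityMeasure ν] {a : ℝ} (ha : 0 < a)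
    (hν : ∀ x, ν (Iic x) = ENNReal.ofReal (F x ^ a))
    (x s : ℝ) (hs : 0 < s) :
    ν {y | s < F y ∧ y ≤ x} = ENNReal.ofReal (F x ^ a - s ^ a) := by
  have hF0 : ∀ y, 0 ≤ F y := fun y =>
    le_of_tendsto hFbot (eventually_atBot.2 ⟨y, fun z hz => hFmono hz⟩)
  rcases le_or_gt (F x) s with hxs | hxs
  · have hempty : {y | s < F y ∧ y ≤ x} = ∅ := by
      ext y; simp only [mem_setOf_eq, mem_empty_iff_false, iff_false, not_and]
      intro hlt hle
      exact absurd (le_trans (hFmono hle) hxs) (not_le.2 hlt)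
    rw [hempty, measure_empty, eq_comm, ENNReal.ofReal_eq_zero]
    have := Real.rpow_le_rpow (hF0 x) hxs ha.le
    linarith
  · -- find u with F u = s and the set is Ioc u x
    obtain ⟨b, hb⟩ : ∃ b, F b < s := (hFbot.eventually_lt_const hs).exists
    have hbx : b ≤ x := by
      by_contra h
      exact absurd (hFmono (le_of_not_ge h)) (not_le.2 (lt_trans hb hxs))
    obtain ⟨w, hw, hFw⟩ : ∃ w ∈ Icc b x, F w = s :=
      intermediate_value_Icc hbx hFcont.continuousOn ⟨hb.le, hxs.le⟩
    set T : Set ℝ := {y | F y ≤ s} with hT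
    have hTne : T.Nonempty := ⟨w, hFw.le⟩
    have hTbdd : BddAbove T := by
      refine ⟨x, fun y hy => ?_⟩
      by_contra h
      exact absurd (le_trans (hFmono (le_of_not_ge h)) hy) (not_le.2 hxs)
    have hTclosed : IsClosed T := isClosed_le hFcont continuous_const
    set u := sSup T with hu
    have huT : u ∈ T := hTclosed.csSup_mem hTne hTbdd
    have hwu : w ≤ u := le_csSup hTbdd hFw.le
    have hFu : F u = s := le_antisymm huT (hFw ▸ hFmono hwu)
    have hux : u ≤ x := csSup_le hTne fun y hy => by
      by_contra h
      exact absurd (le_trans (hFmono (le_of_not_ge h)) hy) (not_le.2 hxs)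
    have hset : {y | s < F y ∧ y ≤ x} = Ioc u x := by
      ext y
      simp only [mem_setOf_eq, mem_Ioc]
      constructor
      · rintro ⟨h1, h2⟩
        refine ⟨?_, h2⟩
        by_contra h
        exact absurd (le_trans (hFmono (le_of_not_gt h)) (hFu ▸ le_refl s)) (not_le.2 h1)
      · rintro ⟨h1, h2⟩
        refine ⟨?_, h2⟩
        by_contra h
        exact absurd (le_csSup hTbdd (le_of_not_gt h : F y ≤ s)) (not_le.2 h1)
    rw [hset, ← Iic_sdiff_Iic, measure_diff (Iic_subset_Iic.2 hux) measurableSet_Iic.nullMeasurableSet (by simp [hν]), hν, hν, hFu,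
      ENNReal.ofReal_sub _ (Real.rpow_nonneg hs.le a)]

lemma key_integral {F : ℝ → ℝ} (hFmono : Monotone F) (hFcont : Continuous F)
    (hFbot : Tendsto F atBot (nhds 0)) (hFtop : Tendsto F atTop (nhds 1))
    (ν : Measure ℝ) [IsProbabilityMeasure ν] {a : ℝ} (ha : 0 < a)
    (hν : ∀ x, ν (Iic x) = ENNReal.ofReal (F x ^ a))
    (x : ℝ) {β : ℝ} (hβ : 0 < β) :
    ∫⁻ y in Iic x, ENNReal.ofReal (F y ^ β) ∂ν
      = ENNReal.ofReal (a / (a + β) * F x ^ (a + β)) := by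
  have hF0 : ∀ y, 0 ≤ F y := fun y =>
    le_of_tendsto hFbot (eventually_atBot.2 ⟨y, fun z hz => hFmono hz⟩)
  have hF1 : ∀ y, F y ≤ 1 := fun y =>
    ge_of_tendsto hFtop (eventually_atTop.2 ⟨y, fun z hz => hFmono hz⟩)
  have hcont : Continuous fun y : ℝ => F y ^ β := by
    have h1 : Continuous fun t : ℝ => t ^ β := by
      rw [continuous_iff_continuousAt]
      exact fun t => Real.continuousAt_rpow_const t β (Or.inr hβ.le)
    exact h1.comp hFcont
  rw [lintegral_eq_lintegral_meas_lt (ν.restrict (Iic x))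
      (Eventually.of_forall fun y => Real.rpow_nonneg (hF0 y) β) hcont.measurable.aemeasurable]
  -- rewrite slices
  have hslice : ∀ t : ℝ, t ∈ Ioi (0:ℝ) →
      (ν.restrict (Iic x)) {y | t < F y ^ β} = ENNReal.ofReal (F x ^ a - t ^ (a / β)) := by
    intro t ht
    rw [Measure.restrict_apply]
    · have hseteq : {y | t < F y ^ β} ∩ Iic x = {y | t ^ (1/β) < F y ∧ y ≤ x} := by
        ext y
        simp only [mem_inter_iff, mem_setOf_eq, mem_Iic]
        constructor
        · rintro ⟨h1, h2⟩
          refine ⟨?_, h2⟩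
          calc t ^ (1/β) < (F y ^ β) ^ (1/β) :=
                Real.rpow_lt_rpow (le_of_lt ht) h1 (by positivity)
            _ = F y := by
                rw [← Real.rpow_mul (hF0 y), mul_one_div_cancel hβ.ne', Real.rpow_one]
        · rintro ⟨h1, h2⟩
          refine ⟨?_, h2⟩
          calc t = (t ^ (1/β)) ^ β := by
                rw [← Real.rpow_mul (le_of_lt ht), one_div_mul_cancel hβ.ne', Real.rpow_one]
            _ < F y ^ β := Real.rpow_lt_rpow (Real.rpow_nonneg ht.le _) h1 hβ
      rw [hseteq, slice_measure hFmono hFcont hFbot hFtop ν ha hν x _ (Real.rpow_pos_of_pos ht (1/β)),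
        ← Real.rpow_mul (le_of_lt ht), one_div_mul_eq_div]
    · exact (isOpen_lt continuous_const hcont).measurableSet
  rw [setLIntegral_congr_fun measurableSet_Ioi hslice]
  -- now compute ∫⁻ t in Ioi 0, ofReal (K - t ^ γ) with K = F x ^ a, γ = a / β
  set γ := a / β with hγdef
  have hγ : 0 < γ := div_pos ha hβ
  have hγcont : Continuous fun t : ℝ => t ^ γ := by
    rw [continuous_iff_continuousAt]
    exact fun t => Real.continuousAt_rpow_const t γ (Or.inr hγ.le)
  set c := F x ^ β with hc
  have hc0 : 0 ≤ c := Real.rpow_nonneg (hF0 x) β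
  have hKc : F x ^ a = c ^ γ := by
    rw [hc, ← Real.rpow_mul (hF0 x), hγdef]
    congr 1
    field_simp
  -- integrand vanishes off Ioc 0 c
  have hsplit : ∫⁻ t in Ioi (0:ℝ), ENNReal.ofReal (F x ^ a - t ^ γ)
      = ∫⁻ t in Ioc (0:ℝ) c, ENNReal.ofReal (F x ^ a - t ^ γ) := by
    rw [← Ioc_union_Ioi_eq_Ioi hc0, lintegral_union measurableSet_Ioi Ioc_disjoint_Ioi_same]
    have : ∫⁻ t in Ioi c, ENNReal.ofReal (F x ^ a - t ^ γ) = 0 := by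
      rw [lintegral_eq_zero_iff]
      · refine (ae_restrict_iff' measurableSet_Ioi).2 (Eventually.of_forall fun t ht => ?_)
        simp only [Pi.zero_apply, ENNReal.ofReal_eq_zero, hKc]
        exact sub_nonpos.2 (Real.rpow_le_rpow hc0 (le_of_lt ht) hγ.le)
      · exact (measurable_const.sub hγcont.measurable).ennreal_ofReal
    rw [this, add_zero]
  rw [hsplit]
  -- convert to a real integral
  have hnn : 0 ≤ᵐ[volume.restrict (Ioc (0:ℝ) c)] fun t => F x ^ a - t ^ γ := by
    refine (ae_restrict_iff' measurableSet_Ioc).2 (Eventually.of_forall fun t ht => ?_)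
    rw [hKc]
    exact sub_nonneg.2 (Real.rpow_le_rpow ht.1.le ht.2 hγ.le)
  have hint : IntegrableOn (fun t => F x ^ a - t ^ γ) (Ioc (0:ℝ) c) := by
    refine (ContinuousOn.integrableOn_Icc ?_).mono_set Ioc_subset_Icc_self
    exact (continuous_const.sub hγcont).continuousOn
  rw [← ofReal_integral_eq_lintegral_ofReal hint hnn]
  congr 1
  rw [← intervalIntegral.integral_of_le hc0]
  have : ∫ t in (0:ℝ)..c, (F x ^ a - t ^ γ) = (F x ^ a) * c - (c ^ (γ+1) - 0 ^ (γ+1)) / (γ+1) := by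
    rw [intervalIntegral.integral_sub intervalIntegrable_const]
    · rw [integral_rpow (Or.inl (by linarith)), intervalIntegral.integral_const, smul_eq_mul,
        mul_comm, sub_zero]
    · apply intervalIntegral.intervalIntegrable_rpow
      exact Or.inl (by linarith)
  rw [this, Real.zero_rpow (by linarith), sub_zero]
  have hcγ1 : c ^ (γ + 1) = F x ^ (a + β) := by
    rw [hc, ← Real.rpow_mul (hF0 x)]
    congr 1
    rw [hγdef]; field_simp
  have hca : F x ^ a * c = F x ^ (a + β) := by
    rw [hc, ← Real.rpow_add' (hF0 x) (by positivity)]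
  rw [hcγ1, hca]
  have hγ1 : γ + 1 = (a + β) / β := by rw [hγdef]; field_simp
  rw [hγ1]
  have hβne : (β:ℝ) ≠ 0 := hβ.ne'
  have habne : a + β ≠ 0 := by positivity
  field_simp
  ring

lemma pair_measure_aux {Ω : Type*} [MeasurableSpace Ω] {μ : Measure Ω} [IsProbabilityMeasure μ]
    {Y W : Ω → ℝ} (hY : Measurable Y) (hW : Measurable W)
    (hind : ProbabilityTheory.IndepFun Y W μ) (x : ℝ) :
    μ {ω | W ω ≤ Y ω ∧ Y ω ≤ x}
      = ∫⁻ y in Iic x, (μ.map W) (Iic y) ∂(μ.map Y) := by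
  have hprod : μ.map (fun ω => (Y ω, W ω)) = (μ.map Y).prod (μ.map W) :=
    (ProbabilityTheory.indepFun_iff_map_prod_eq_prod_map_map hY.aemeasurable hW.aemeasurable).1 hind
  have hSmeas : MeasurableSet {p : ℝ × ℝ | p.2 ≤ p.1 ∧ p.1 ≤ x} :=
    (measurableSet_le measurable_snd measurable_fst).inter
      (measurableSet_le measurable_fst measurable_const)
  have h1 : μ {ω | W ω ≤ Y ω ∧ Y ω ≤ x}
      = (μ.map (fun ω => (Y ω, W ω))) {p : ℝ × ℝ | p.2 ≤ p.1 ∧ p.1 ≤ x} := by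
    rw [Measure.map_apply (hY.prodMk hW) hSmeas]
    rfl
  rw [h1, hprod, Measure.prod_apply hSmeas]
  have h2 : ∀ y : ℝ, (Prod.mk y ⁻¹' {p : ℝ × ℝ | p.2 ≤ p.1 ∧ p.1 ≤ x})
      = if y ≤ x then Iic y else ∅ := by
    intro y
    ext w
    by_cases h : y ≤ x <;> simp [h]
  have h3 : (fun y => (μ.map W) (Prod.mk y ⁻¹' {p : ℝ × ℝ | p.2 ≤ p.1 ∧ p.1 ≤ x}))
      = (Iic x).indicator (fun y => (μ.map W) (Iic y)) := by
    funext y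
    rw [h2]
    by_cases h : y ≤ x <;> simp [h, indicator]
  rw [h3, lintegral_indicator measurableSet_Iic]

lemma indep_block {Ω : Type*} [MeasurableSpace Ω] {μ : Measure Ω}
    (X : ℕ → Ω → ℝ) (hXmeas : ∀ i, Measurable (X i))
    (hindep : ProbabilityTheory.iIndepFun X μ)
    (N : ℕ) (g : (ℕ → ℝ) → ℝ) (hg : Measurable g) :
    ProbabilityTheory.IndepFun (X (N+1))
      (fun ω => g (fun i => if i ≤ N then X i ω else 0)) μ := by
  have hdisj : Disjoint ({N+1} : Finset ℕ) (Finset.range (N+1)) := by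
    simp [Finset.disjoint_left]
  have h := hindep.indepFun_finset {N+1} (Finset.range (N+1)) hdisj hXmeas
  have hφ : Measurable fun v : ({N+1} : Finset ℕ) → ℝ =>
      v ⟨N+1, Finset.mem_singleton_self _⟩ := measurable_pi_apply _
  have hh : Measurable fun u : (Finset.range (N+1) : Finset ℕ) → ℝ =>
      g (fun i => if hi : i ∈ Finset.range (N+1) then u ⟨i, hi⟩ else 0) := by
    refine hg.comp (measurable_pi_lambda _ fun i => ?_)
    by_cases hi : i ∈ Finset.range (N+1)
    · simpa [hi] using measurable_pi_apply (⟨i, hi⟩ : (Finset.range (N+1) : Finset ℕ))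
    · simpa [hi] using measurable_const
  have h2 := h.comp hφ hh
  have heq : ((fun u : (Finset.range (N+1) : Finset ℕ) → ℝ =>
      g fun i => if hi : i ∈ Finset.range (N+1) then u ⟨i, hi⟩ else 0) ∘
        (fun a (i : (Finset.range (N+1) : Finset ℕ)) => X i a))
      = fun ω => g (fun i => if i ≤ N then X i ω else 0) := by
    funext ω
    simp only [Function.comp_apply]
    congr 1
    funext i
    by_cases hi : i ≤ N
    · simp [Finset.mem_range, Nat.lt_succ_iff, hi]
    · simp [Finset.mem_range, Nat.lt_succ_iff, hi]
  rw [heq] at h2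
  exact h2

lemma main_induction
    {Ω : Type*} [MeasurableSpace Ω] (μ : Measure Ω) [IsProbabilityMeasure μ]
    (F : ℝ → ℝ) (hFmono : Monotone F) (hFcont : Continuous F)
    (hFbot : Tendsto F atBot (nhds 0)) (hFtop : Tendsto F atTop (nhds 1))
    (α : ℕ → ℝ) (hαpos : ∀ i, 0 < α i)
    (X : ℕ → Ω → ℝ) (hXmeas : ∀ i, Measurable (X i))
    (hindep : ProbabilityTheory.iIndepFun X μ)
    (hlaw : ∀ i x, μ {ω | X i ω ≤ x} = ENNReal.ofReal (F x ^ α i)) :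
    ∀ (N : ℕ) (S : Finset ℕ), S ⊆ Finset.range (N+1) → ∀ x : ℝ,
    μ {ω | (∀ n ∈ S, ∀ i < n, X i ω ≤ X n ω) ∧ ∀ i ≤ N, X i ω ≤ x}
      = ENNReal.ofReal ((∏ n ∈ S, α n / (∑ i ∈ Finset.range (n+1), α i))
          * F x ^ (∑ i ∈ Finset.range (N+1), α i)) := by
  have hApos : ∀ n : ℕ, 0 < ∑ i ∈ Finset.range (n+1), α i := fun n =>
    Finset.sum_pos (fun i _ => hαpos i) Finset.nonempty_range_add_one
  have hν : ∀ j x, (μ.map (X j)) (Iic x) = ENNReal.ofReal (F x ^ α j) := by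
    intro j x
    rw [Measure.map_apply (hXmeas j) measurableSet_Iic]
    exact hlaw j x
  haveI : ∀ j : ℕ, IsProbabilityMeasure (μ.map (X j)) := fun j =>
    Measure.isProbabilityMeasure_map (hXmeas j).aemeasurable
  intro N
  induction N with
  | zero =>
    intro S hS x
    have hset : {ω | (∀ n ∈ S, ∀ i < n, X i ω ≤ X n ω) ∧ ∀ i ≤ 0, X i ω ≤ x}
        = {ω | X 0 ω ≤ x} := by
      ext ω
      simp only [mem_setOf_eq, Nat.le_zero, forall_eq, and_iff_right_iff_imp]
      intro _ n hn i hi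
      have : n = 0 := by
        have := hS hn; simp [Finset.mem_range] at this; omega
      omega
    rw [hset, hlaw 0 x]
    have hprod : (∏ n ∈ S, α n / (∑ i ∈ Finset.range (n+1), α i)) = 1 := by
      rcases Finset.subset_singleton_iff.1 (by simpa [Finset.range_one] using hS) with rfl | rfl
      · simp
      · simp [Finset.sum_range_one, div_self (hαpos 0).ne']
    rw [hprod, one_mul, Finset.sum_range_one]
  | succ N ih =>
    intro S hS x
    by_cases hmem : N + 1 ∈ S
    · -- Case N+1 ∈ S
      classical
      have hFx0 : 0 ≤ F x := le_of_tendsto hFbot (eventually_atBot.2 ⟨x, fun z hz => hFmono hz⟩)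
      set S' := S.erase (N+1) with hS'def
      have hS'sub : S' ⊆ Finset.range (N+1) := by
        intro n hn
        have h1 := hS (Finset.mem_of_mem_erase hn)
        have h2 := Finset.ne_of_mem_erase hn
        simp only [Finset.mem_range] at h1 ⊢
        omega
      set g : (ℕ → ℝ) → ℝ := fun v =>
        if (∀ n ∈ S', ∀ i < n, v i ≤ v n)
        then (Finset.range (N+1)).sup' Finset.nonempty_range_add_one v else x + 1 with hg
      have hgmeas : Measurable g := by
        refine Measurable.ite ?_ ?_ measurable_const
        · have : {v : ℕ → ℝ | ∀ n ∈ S', ∀ i < n, v i ≤ v n}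
              = ⋂ n, ⋂ (_ : n ∈ S'), ⋂ i, ⋂ (_ : i < n), {v : ℕ → ℝ | v i ≤ v n} := by
            ext v; simp [mem_iInter]
          rw [this]
          exact MeasurableSet.iInter fun n => MeasurableSet.iInter fun _ =>
            MeasurableSet.iInter fun i => MeasurableSet.iInter fun _ =>
              measurableSet_le (measurable_pi_apply i) (measurable_pi_apply n)
        · have h1 : (fun v : ℕ → ℝ => (Finset.range (N+1)).sup' Finset.nonempty_range_add_one v)
              = (Finset.range (N+1)).sup' Finset.nonempty_range_add_one
                  (fun i (v : ℕ → ℝ) => v i) := by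
            funext v; rw [Finset.sup'_apply]
          have h2 : Measurable ((Finset.range (N+1)).sup' Finset.nonempty_range_add_one
              (fun i (v : ℕ → ℝ) => v i)) :=
            Finset.measurable_sup' _ fun i _ => measurable_pi_apply i
          rw [← h1] at h2
          exact h2
      have hWind := indep_block X hXmeas hindep N g hgmeas
      set W : Ω → ℝ := fun ω => g (fun i => if i ≤ N then X i ω else 0) with hW
      have hWmeas : Measurable W := by
        refine hgmeas.comp (measurable_pi_lambda _ fun i => ?_)
        by_cases hi : i ≤ N
        · simpa [hi] using hXmeas i
        · simpa [hi] using measurable_const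
      have hWeq : ∀ ω, W ω = if (∀ n ∈ S', ∀ i < n, X i ω ≤ X n ω)
          then (Finset.range (N+1)).sup' Finset.nonempty_range_add_one (fun i => X i ω)
          else x + 1 := by
        intro ω
        have hcond : (∀ n ∈ S', ∀ i < n,
              (if i ≤ N then X i ω else 0) ≤ (if n ≤ N then X n ω else 0))
            ↔ (∀ n ∈ S', ∀ i < n, X i ω ≤ X n ω) := by
          constructor
          · intro h1 n hn i hi
            have hnN : n ≤ N := Nat.lt_succ_iff.1 (Finset.mem_range.1 (hS'sub hn))
            have hiN : i ≤ N := le_trans (Nat.le_of_lt_succ (Nat.lt_succ_of_lt hi)) hnN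
            have := h1 n hn i hi
            rwa [if_pos hiN, if_pos hnN] at this
          · intro h1 n hn i hi
            have hnN : n ≤ N := Nat.lt_succ_iff.1 (Finset.mem_range.1 (hS'sub hn))
            have hiN : i ≤ N := le_trans (Nat.le_of_lt_succ (Nat.lt_succ_of_lt hi)) hnN
            rw [if_pos hiN, if_pos hnN]
            exact h1 n hn i hi
        have hbr : (Finset.range (N+1)).sup' Finset.nonempty_range_add_one
              (fun i => if i ≤ N then X i ω else 0)
            = (Finset.range (N+1)).sup' Finset.nonempty_range_add_one (fun i => X i ω) :=
          Finset.sup'_congr _ rfl fun i hi =>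
            if_pos (Nat.lt_succ_iff.1 (Finset.mem_range.1 hi))
        simp only [hW, hg]
        exact if_congr hcond hbr rfl
      -- event equality
      have hsplit : {ω | (∀ n ∈ S, ∀ i < n, X i ω ≤ X n ω) ∧ ∀ i ≤ N + 1, X i ω ≤ x}
          = {ω | W ω ≤ X (N+1) ω ∧ X (N+1) ω ≤ x} := by
        ext ω
        simp only [mem_setOf_eq, hWeq ω]
        constructor
        · rintro ⟨h1, h2⟩
          have hblock' : ∀ n ∈ S', ∀ i < n, X i ω ≤ X n ω :=
            fun n hn => h1 n (Finset.mem_of_mem_erase hn)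
          refine ⟨?_, h2 (N+1) le_rfl⟩
          rw [if_pos hblock']
          rw [Finset.sup'_le_iff]
          intro i hi
          exact h1 (N+1) hmem i (Finset.mem_range.1 hi)
        · rintro ⟨h1, h2⟩
          by_cases hc : ∀ n ∈ S', ∀ i < n, X i ω ≤ X n ω
          · rw [if_pos hc] at h1
            have hle : ∀ i, i ≤ N → X i ω ≤ X (N+1) ω := fun i hi =>
              le_trans (Finset.le_sup' (fun j => X j ω)
                (Finset.mem_range.2 (Nat.lt_succ_of_le hi))) h1
            constructor
            · intro n hn i hi
              rcases eq_or_ne n (N+1) with rfl | hne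
              · exact hle i (Nat.lt_succ_iff.1 hi)
              · exact hc n (Finset.mem_erase.2 ⟨hne, hn⟩) i hi
            · intro i hi
              rcases Nat.lt_succ_iff_lt_or_eq.1 (Nat.lt_succ_of_le hi) with h | rfl
              · exact le_trans (hle i (Nat.lt_succ_iff.1 h)) h2
              · exact h2
          · rw [if_neg hc] at h1
            linarith
      rw [hsplit, pair_measure_aux (hXmeas (N+1)) hWmeas hWind x]
      have hc'0 : 0 ≤ ∏ n ∈ S', α n / ∑ i ∈ Finset.range (n+1), α i :=
        Finset.prod_nonneg fun n _ => div_nonneg (hαpos n).le (hApos n).le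
      have hin : ∀ y ∈ Iic x, (μ.map W) (Iic y)
          = ENNReal.ofReal (∏ n ∈ S', α n / ∑ i ∈ Finset.range (n+1), α i)
            * ENNReal.ofReal (F y ^ ∑ i ∈ Finset.range (N+1), α i) := by
        intro y hy
        rw [Measure.map_apply hWmeas measurableSet_Iic]
        have hset : W ⁻¹' (Iic y)
            = {ω | (∀ n ∈ S', ∀ i < n, X i ω ≤ X n ω) ∧ ∀ i ≤ N, X i ω ≤ y} := by
          ext ω
          simp only [mem_preimage, mem_Iic, mem_setOf_eq, hWeq ω]
          by_cases hc : ∀ n ∈ S', ∀ i < n, X i ω ≤ X n ω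
          · rw [if_pos hc]
            simp only [Finset.sup'_le_iff, Finset.mem_range, Nat.lt_succ_iff]
            constructor
            · intro h; exact ⟨hc, h⟩
            · intro h; exact h.2
          · rw [if_neg hc]
            have hyx : y ≤ x := hy
            constructor
            · intro h; linarith
            · intro h; exact absurd h.1 hc
        rw [hset, ih S' hS'sub y, ENNReal.ofReal_mul hc'0]
      rw [setLIntegral_congr_fun measurableSet_Iic hin,
        lintegral_const_mul' _ _ ENNReal.ofReal_ne_top,
        key_integral hFmono hFcont hFbot hFtop (μ.map (X (N+1))) (hαpos (N+1))
          (hν (N+1)) x (hApos N),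
        ← ENNReal.ofReal_mul hc'0]
      congr 1
      have hsum : ∑ i ∈ Finset.range (N+1+1), α i
          = (∑ i ∈ Finset.range (N+1), α i) + α (N+1) := Finset.sum_range_succ α (N+1)
      rw [← Finset.mul_prod_erase S _ hmem, ← hS'def, hsum,
        add_comm (α (N+1)) (∑ i ∈ Finset.range (N+1), α i)]
      ring
    · -- Case N+1 ∉ S : independence of block event and X (N+1)
      have hSsub : S ⊆ Finset.range (N+1) := by
        intro n hn
        have h1 := hS hn
        simp only [Finset.mem_range] at h1 ⊢
        rcases Nat.lt_succ_iff_lt_or_eq.1 h1 with h | rfl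
        · exact h
        · exact absurd hn hmem
      classical
      set g : (ℕ → ℝ) → ℝ := fun v =>
        if (∀ n ∈ S, ∀ i < n, v i ≤ v n) ∧ (∀ i ≤ N, v i ≤ x) then x else x + 1 with hg
      have hgmeas : Measurable g := by
        refine Measurable.ite ?_ measurable_const measurable_const
        have : {v : ℕ → ℝ | (∀ n ∈ S, ∀ i < n, v i ≤ v n) ∧ (∀ i ≤ N, v i ≤ x)}
            = (⋂ n, ⋂ (_ : n ∈ S), ⋂ i, ⋂ (_ : i < n), {v : ℕ → ℝ | v i ≤ v n})
              ∩ (⋂ i, ⋂ (_ : i ≤ N), {v : ℕ → ℝ | v i ≤ x}) := by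
          ext v; simp [mem_iInter]
        rw [this]
        refine MeasurableSet.inter ?_ ?_
        · exact MeasurableSet.iInter fun n => MeasurableSet.iInter fun _ =>
            MeasurableSet.iInter fun i => MeasurableSet.iInter fun _ =>
              measurableSet_le (measurable_pi_apply i) (measurable_pi_apply n)
        · exact MeasurableSet.iInter fun i => MeasurableSet.iInter fun _ =>
            measurableSet_le (measurable_pi_apply i) measurable_const
      have hWind := indep_block X hXmeas hindep N g hgmeas
      set W : Ω → ℝ := fun ω => g (fun i => if i ≤ N then X i ω else 0) with hW
      have hWeq : ∀ ω, W ω = if (∀ n ∈ S, ∀ i < n, X i ω ≤ X n ω) ∧ (∀ i ≤ N, X i ω ≤ x)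
          then x else x + 1 := by
        intro ω
        have hcond : ((∀ n ∈ S, ∀ i < n, (if i ≤ N then X i ω else 0) ≤ (if n ≤ N then X n ω else 0))
            ∧ (∀ i ≤ N, (if i ≤ N then X i ω else 0) ≤ x))
            ↔ ((∀ n ∈ S, ∀ i < n, X i ω ≤ X n ω) ∧ (∀ i ≤ N, X i ω ≤ x)) := by
          constructor
          · rintro ⟨h1, h2⟩
            refine ⟨fun n hn i hi => ?_, fun i hi => ?_⟩
            · have hnN : n ≤ N := Nat.lt_succ_iff.1 (Finset.mem_range.1 (hSsub hn))
              have hiN : i ≤ N := le_trans (Nat.le_of_lt_succ (Nat.lt_succ_of_lt hi)) hnN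
              have := h1 n hn i hi
              rwa [if_pos hiN, if_pos hnN] at this
            · have := h2 i hi
              rwa [if_pos hi] at this
          · rintro ⟨h1, h2⟩
            refine ⟨fun n hn i hi => ?_, fun i hi => ?_⟩
            · have hnN : n ≤ N := Nat.lt_succ_iff.1 (Finset.mem_range.1 (hSsub hn))
              have hiN : i ≤ N := le_trans (Nat.le_of_lt_succ (Nat.lt_succ_of_lt hi)) hnN
              rw [if_pos hiN, if_pos hnN]
              exact h1 n hn i hi
            · rw [if_pos hi]
              exact h2 i hi
        simp only [hW, hg]
        exact if_congr hcond rfl rfl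
      -- the event splits as an intersection of two preimages
      have hsplit : {ω | (∀ n ∈ S, ∀ i < n, X i ω ≤ X n ω) ∧ ∀ i ≤ N + 1, X i ω ≤ x}
          = X (N+1) ⁻¹' (Iic x) ∩ W ⁻¹' (Iic x) := by
        ext ω
        simp only [mem_setOf_eq, mem_inter_iff, mem_preimage, mem_Iic, hWeq ω]
        constructor
        · rintro ⟨h1, h2⟩
          refine ⟨h2 (N+1) le_rfl, ?_⟩
          rw [if_pos ⟨h1, fun i hi => h2 i (le_trans hi (Nat.le_succ N))⟩]
        · rintro ⟨h1, h2⟩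
          by_cases hc : (∀ n ∈ S, ∀ i < n, X i ω ≤ X n ω) ∧ (∀ i ≤ N, X i ω ≤ x)
          · refine ⟨hc.1, fun i hi => ?_⟩
            rcases Nat.lt_succ_iff_lt_or_eq.1 (Nat.lt_succ_of_le hi) with h | rfl
            · exact hc.2 i (Nat.lt_succ_iff.1 h)
            · exact h1
          · rw [if_neg hc] at h2
            linarith
      rw [hsplit]
      have := (ProbabilityTheory.indepFun_iff_measure_inter_preimage_eq_mul.1 hWind)
        (Iic x) (Iic x) measurableSet_Iic measurableSet_Iic
      rw [this]
      have hYpre : μ (X (N+1) ⁻¹' (Iic x)) = ENNReal.ofReal (F x ^ α (N+1)) := by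
        rw [show X (N+1) ⁻¹' (Iic x) = {ω | X (N+1) ω ≤ x} from rfl, hlaw]
      rw [hYpre]
      have hWpre : W ⁻¹' (Iic x)
          = {ω | (∀ n ∈ S, ∀ i < n, X i ω ≤ X n ω) ∧ ∀ i ≤ N, X i ω ≤ x} := by
        ext ω
        simp only [mem_preimage, mem_Iic, mem_setOf_eq, hWeq ω]
        by_cases hc : (∀ n ∈ S, ∀ i < n, X i ω ≤ X n ω) ∧ (∀ i ≤ N, X i ω ≤ x)
        · rw [if_pos hc]
          exact iff_of_true le_rfl hc
        · simp only [if_neg hc]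
          constructor
          · intro h; linarith
          · intro h; exact absurd h hc
      have hFx0 : 0 ≤ F x := le_of_tendsto hFbot (eventually_atBot.2 ⟨x, fun z hz => hFmono hz⟩)
      rw [hWpre, ih S hSsub x, ← ENNReal.ofReal_mul (Real.rpow_nonneg hFx0 _)]
      congr 1
      have hsum : ∑ i ∈ Finset.range (N+1+1), α i
          = (∑ i ∈ Finset.range (N+1), α i) + α (N+1) := Finset.sum_range_succ α (N+1)
      rw [hsum, Real.rpow_add' hFx0 (add_pos (hApos N) (hαpos (N+1))).ne']
      ring

lemma block_measure {Ω : Type*} [MeasurableSpace Ω] (μ : Measure Ω) [IsProbabilityMeasure μ]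
    (F : ℝ → ℝ) (hFmono : Monotone F) (hFcont : Continuous F)
    (hFbot : Tendsto F atBot (nhds 0)) (hFtop : Tendsto F atTop (nhds 1))
    (α : ℕ → ℝ) (hαpos : ∀ i, 0 < α i)
    (X : ℕ → Ω → ℝ) (hXmeas : ∀ i, Measurable (X i))
    (hmain : ∀ (N : ℕ) (S : Finset ℕ), S ⊆ Finset.range (N+1) → ∀ x : ℝ,
      μ {ω | (∀ n ∈ S, ∀ i < n, X i ω ≤ X n ω) ∧ ∀ i ≤ N, X i ω ≤ x}
        = ENNReal.ofReal ((∏ n ∈ S, α n / (∑ i ∈ Finset.range (n+1), α i))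
            * F x ^ (∑ i ∈ Finset.range (N+1), α i)))
    (N : ℕ) (S : Finset ℕ) (hS : S ⊆ Finset.range (N+1)) :
    μ {ω | ∀ n ∈ S, ∀ i < n, X i ω ≤ X n ω}
      = ENNReal.ofReal (∏ n ∈ S, α n / (∑ i ∈ Finset.range (n+1), α i)) := by
  set G : ℕ → Set Ω := fun k =>
    {ω | (∀ n ∈ S, ∀ i < n, X i ω ≤ X n ω) ∧ ∀ i ≤ N, X i ω ≤ (k : ℝ)} with hG
  have hmono : Monotone G := by
    intro k l hkl ω hω
    exact ⟨hω.1, fun i hi => le_trans (hω.2 i hi) (Nat.cast_le.2 hkl)⟩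
  have hunion : (⋃ k, G k) = {ω | ∀ n ∈ S, ∀ i < n, X i ω ≤ X n ω} := by
    ext ω
    simp only [mem_iUnion, hG, mem_setOf_eq]
    constructor
    · rintro ⟨k, hk⟩; exact hk.1
    · intro h
      obtain ⟨k, hk⟩ := exists_nat_ge ((Finset.range (N+1)).sup'
        Finset.nonempty_range_add_one (fun i => X i ω))
      refine ⟨k, h, fun i hi => le_trans ?_ hk⟩
      exact Finset.le_sup' (fun j => X j ω) (Finset.mem_range.2 (Nat.lt_succ_of_le hi))
  have h1 : Tendsto (fun k => μ (G k)) atTop (nhds (μ (⋃ k, G k))) :=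
    tendsto_measure_iUnion_atTop hmono
  have h2 : Tendsto (fun k => μ (G k)) atTop
      (nhds (ENNReal.ofReal (∏ n ∈ S, α n / (∑ i ∈ Finset.range (n+1), α i)))) := by
    have heq : ∀ k : ℕ, μ (G k) = ENNReal.ofReal
        ((∏ n ∈ S, α n / (∑ i ∈ Finset.range (n+1), α i))
          * F (k : ℝ) ^ (∑ i ∈ Finset.range (N+1), α i)) := fun k => hmain N S hS _
    simp_rw [heq]
    have hA : (0:ℝ) ≤ ∑ i ∈ Finset.range (N+1), α i :=
      (Finset.sum_pos (fun i _ => hαpos i) Finset.nonempty_range_add_one).le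
    have hF1 : Tendsto (fun k : ℕ => F (k : ℝ)) atTop (nhds 1) :=
      hFtop.comp (tendsto_natCast_atTop_atTop)
    have hpow : Tendsto (fun k : ℕ => F (k : ℝ) ^ (∑ i ∈ Finset.range (N+1), α i)) atTop
        (nhds 1) := by
      have hc : ContinuousAt (fun t : ℝ => t ^ (∑ i ∈ Finset.range (N+1), α i)) 1 :=
        Real.continuousAt_rpow_const 1 _ (Or.inr hA)
      have := hc.tendsto.comp hF1
      simpa [Function.comp_def, Real.one_rpow] using this
    have := (ENNReal.continuous_ofReal.tendsto _).comp
      ((tendsto_const_nhds.mul hpow) :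
        Tendsto (fun k : ℕ => (∏ n ∈ S, α n / (∑ i ∈ Finset.range (n+1), α i))
          * F (k : ℝ) ^ (∑ i ∈ Finset.range (N+1), α i)) atTop
          (nhds ((∏ n ∈ S, α n / (∑ i ∈ Finset.range (n+1), α i)) * 1)))
    simpa [Function.comp_def, mul_one] using this
  rw [← hunion]
  exact tendsto_nhds_unique h1 h2

end AuxiliaryLemmas

theorem stmt18 {Ω : Type*} [MeasurableSpace Ω] (μ : Measure Ω) [IsProbabilityMeasure μ]
    (F : ℝ → ℝ) (hFmono : Monotone F) (hFcont : Continuous F)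
    (hFbot : Tendsto F atBot (nhds 0)) (hFtop : Tendsto F atTop (nhds 1))
    (α : ℕ → ℝ) (hαpos : ∀ i, 0 < α i) (hα1 : α 0 = 1)
    (X : ℕ → Ω → ℝ) (hXmeas : ∀ i, Measurable (X i))
    (hindep : ProbabilityTheory.iIndepFun X μ)
    (hlaw : ∀ i x, μ {ω | X i ω ≤ x} = ENNReal.ofReal (F x ^ α i))
    -- `M n` is the partial maximum of the first `n + 1` observations
    (M : ℕ → Ω → ℝ)
    (hMdef : ∀ n ω, M n ω = (Finset.range (n + 1)).sup' Finset.nonempty_range_add_one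
      fun i => X i ω)
    (hαtop : Tendsto α atTop atTop)
    (hratio : Tendsto (fun n => (∑ i ∈ Finset.range (n + 1), α i)
        / ∑ i ∈ Finset.range (n + 2), α i) atTop (nhds 0)) :
    (∑' n : ℕ, ENNReal.ofReal ((∑ i ∈ Finset.range (n + 1), α i)
        / ∑ i ∈ Finset.range (n + 2), α i) ≠ ⊤ →
      μ (limsup (fun n => {ω | X n ω < M n ω}) atTop) = 0) ∧
    (∑' n : ℕ, ENNReal.ofReal ((∑ i ∈ Finset.range (n + 1), α i)
        / ∑ i ∈ Finset.range (n + 2), α i) = ⊤ →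
      μ (limsup (fun n => {ω | X n ω < M n ω}) atTop) = 1) := by
  classical
  have hblock := fun (N : ℕ) (S : Finset ℕ) (hS : S ⊆ Finset.range (N+1)) =>
    block_measure μ F hFmono hFcont hFbot hFtop α hαpos X hXmeas
      (main_induction μ F hFmono hFcont hFbot hFtop α hαpos X hXmeas hindep hlaw) N S hS
  have hApos : ∀ n : ℕ, 0 < ∑ i ∈ Finset.range (n+1), α i := fun n =>
    Finset.sum_pos (fun i _ => hαpos i) Finset.nonempty_range_add_one
  set B : ℕ → Set Ω := fun n => {ω | ∀ i < n, X i ω ≤ X n ω} with hB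
  have hBmeas : ∀ n, MeasurableSet (B n) := by
    intro n
    have : B n = ⋂ i, ⋂ (_ : i < n), {ω | X i ω ≤ X n ω} := by
      ext ω; simp [hB, mem_iInter]
    rw [this]
    exact MeasurableSet.iInter fun i => MeasurableSet.iInter fun _ =>
      measurableSet_le (hXmeas i) (hXmeas n)
  -- single-set measure
  have hBsingle : ∀ n, μ (B n) = ENNReal.ofReal (α n / ∑ i ∈ Finset.range (n+1), α i) := by
    intro n
    have h := hblock n {n} (by simp [Finset.mem_range])
    have hset : {ω | ∀ m ∈ ({n} : Finset ℕ), ∀ i < m, X i ω ≤ X m ω} = B n := by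
      ext ω; simp [hB]
    rw [hset] at h
    rw [h, Finset.prod_singleton]
  -- independence of the B's
  have hiB : ProbabilityTheory.iIndepSet B μ := by
    rw [ProbabilityTheory.iIndepSet_iff_meas_biInter hBmeas]
    intro s
    have hset : (⋂ n ∈ s, B n) = {ω | ∀ n ∈ s, ∀ i < n, X i ω ≤ X n ω} := by
      ext ω; simp [hB, mem_iInter]
    have hsub : s ⊆ Finset.range (s.sup id + 1) := fun n hn =>
      Finset.mem_range.2 (Nat.lt_succ_of_le (Finset.le_sup (f := id) hn))
    rw [hset, hblock _ s hsub,
      ENNReal.ofReal_prod_of_nonneg fun n _ => div_nonneg (hαpos n).le (hApos n).le]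
    exact Finset.prod_congr rfl fun n _ => (hBsingle n).symm
  -- E n = complement of B n equals the statement's sets
  have hEeq : ∀ n, {ω | X n ω < M n ω} = (B n)ᶜ := by
    intro n
    ext ω
    simp only [mem_setOf_eq, hMdef n ω, mem_compl_iff, hB, Finset.lt_sup'_iff, not_forall]
    constructor
    · rintro ⟨i, hi, hlt⟩
      have hin : i < n := by
        rcases Nat.lt_succ_iff_lt_or_eq.1 (Finset.mem_range.1 hi) with h | rfl
        · exact h
        · exact absurd hlt (lt_irrefl _)
      exact ⟨i, hin, not_le.2 hlt⟩
    · rintro ⟨i, hin, hle⟩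
      exact ⟨i, Finset.mem_range.2 (Nat.lt_succ_of_lt hin), not_le.1 hle⟩
  have hEmeas : ∀ n, MeasurableSet {ω | X n ω < M n ω} := by
    intro n; rw [hEeq n]; exact (hBmeas n).compl
  -- measure of E n
  have hEmeasure : ∀ n, μ {ω | X n ω < M n ω}
      = ENNReal.ofReal (1 - α n / ∑ i ∈ Finset.range (n+1), α i) := by
    intro n
    rw [hEeq n, measure_compl (hBmeas n) (measure_ne_top μ _), hBsingle n,
      measure_univ]
    rw [ENNReal.ofReal_sub _ (div_nonneg (hαpos n).le (hApos n).le), ENNReal.ofReal_one]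
  have hEsucc : ∀ n : ℕ, μ {ω | X (n+1) ω < M (n+1) ω}
      = ENNReal.ofReal ((∑ i ∈ Finset.range (n+1), α i) / ∑ i ∈ Finset.range (n+2), α i) := by
    intro n
    rw [hEmeasure (n+1)]
    congr 1
    have h2 : ∑ i ∈ Finset.range (n+2), α i
        = (∑ i ∈ Finset.range (n+1), α i) + α (n+1) := Finset.sum_range_succ α (n+1)
    have hne := (add_pos (hApos n) (hαpos (n+1))).ne'
    rw [h2, eq_div_iff hne, sub_mul, one_mul, div_mul_cancel₀ _ hne]
    exact add_sub_cancel_right _ _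
  have hE0 : μ {ω | X 0 ω < M 0 ω} = 0 := by
    rw [hEmeasure 0]
    norm_num [Finset.sum_range_one, div_self (hαpos 0).ne']
  -- total sum
  have hsum : ∑' n, μ {ω | X n ω < M n ω}
      = ∑' n : ℕ, ENNReal.ofReal ((∑ i ∈ Finset.range (n + 1), α i)
        / ∑ i ∈ Finset.range (n + 2), α i) := by
    rw [tsum_eq_zero_add' ENNReal.summable, hE0, zero_add]
    exact tsum_congr fun n => hEsucc n
  constructor
  · intro hfin
    exact measure_limsup_atTop_eq_zero (by rw [hsum]; exact hfin)
  · intro hinf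
    have hiE : ProbabilityTheory.iIndepSet (fun n => {ω | X n ω < M n ω}) μ := by
      have hindepB := (ProbabilityTheory.iIndepSet_iff_iIndep B μ).1 hiB
      rw [ProbabilityTheory.iIndepSet_iff_iIndep, ProbabilityTheory.iIndep_iff]
      intro s f hf
      refine hindepB.meas_biInter fun i hi => ?_
      have hle : MeasurableSpace.generateFrom {{ω | X i ω < M i ω}}
          ≤ MeasurableSpace.generateFrom {B i} := by
        refine MeasurableSpace.generateFrom_le fun t ht => ?_
        rw [mem_singleton_iff] at ht
        rw [ht, hEeq i]
        exact (MeasurableSpace.measurableSet_generateFrom (mem_singleton _)).compl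
      exact hle _ (hf i hi)
    exact ProbabilityTheory.measure_limsup_eq_one hEmeas hiE (by rw [hsum]; exact hinf)
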